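/- Let X₁, …, Xₙ be independent sub-uniform random variables with standard deviations σ₁, …, σₙ, all strictly positive, and let Ȳₙ = n⁻¹ Σᵢ (1/2 − Xᵢ)/σᵢ. Then for every t ≥ 0 and every h > 0, P(Ȳₙ ≥ t) ≤ ∏ᵢ exp[−h{t + 1/(2σᵢ)}] · { (e^{h/σᵢ} − 1)/(h/σᵢ) + h²(1/2 − 1/(24 σᵢ²)) }. -/

import Mathlib

open MeasureTheory Set

/-- A real-valued random variable `X` on a probability space `(Ω, P)` is *sub-uniform*
if it is dominated in the convex order by the uniform distribution `U` on `[0,1]`: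
`E[h(X)] ≤ E[h(U)]` for every convex `h : ℝ → ℝ` for which both expectations exist.
(The expectation `E[h(X)]` exists, with a value in `(-∞, ∞]`, precisely when the
negative part of `h ∘ X` is integrable; in that case the inequality
`E[h(X)] ≤ E[h(U)] < ∞` forces `h ∘ X` to be integrable.  The expectation `E[h(U)]`
always exists, since a convex function on `ℝ` is continuous, hence bounded on `[0,1]`.) -/
def SubUniform {Ω : Type*} [MeasurableSpace Ω] (P : Measure Ω) (X : Ω → ℝ) : Prop :=
  ∀ h : ℝ → ℝ, ConvexOn ℝ Set.univ h →
    Integrable (fun ω => max (-(h (X ω))) 0) P →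
    Integrable (fun ω => h (X ω)) P ∧
      ∫ ω, h (X ω) ∂P ≤ ∫ x in Set.Icc (0:ℝ) 1, h x ∂volume

noncomputable def clampR (x : ℝ) : ℝ := max 0 (min x 1)

lemma clampR_cont : Continuous clampR := (continuous_const.max ((continuous_id.min continuous_const)))

lemma clampR_nonneg (x : ℝ) : 0 ≤ clampR x := le_max_left _ _
lemma clampR_le_one (x : ℝ) : clampR x ≤ 1 := max_le zero_le_one (min_le_right _ _)
lemma clampR_mono : Monotone clampR := fun a b h => max_le_max le_rfl (min_le_min (by exact h) le_rfl)
lemma clampR_of_nonpos {x : ℝ} (h : x ≤ 0) : clampR x = 0 := by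
  have : min x 1 ≤ 0 := min_le_of_left_le h
  simp [clampR, max_eq_left this]
lemma clampR_of_mem {x : ℝ} (h0 : 0 ≤ x) (h1 : x ≤ 1) : clampR x = x := by
  simp [clampR, min_eq_left h1, max_eq_right h0]
lemma clampR_of_ge {x : ℝ} (h : 1 ≤ x) : clampR x = 1 := by
  simp [clampR, min_eq_right h]

noncomputable def phiR (x : ℝ) : ℝ := ∫ t in (0:ℝ)..x, 2 * clampR t

lemma phiR_hasDerivAt (x : ℝ) : HasDerivAt phiR (2 * clampR x) x :=
  ((continuous_const.mul clampR_cont).integral_hasStrictDerivAt 0 x).hasDerivAt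

lemma phiR_of_nonpos {x : ℝ} (h : x ≤ 0) : phiR x = 0 := by
  have : ∀ t ∈ uIcc x 0, 2 * clampR t = 0 := by
    intro t ht
    rw [uIcc_of_le h] at ht
    rw [clampR_of_nonpos ht.2, mul_zero]
  rw [phiR, intervalIntegral.integral_symm, intervalIntegral.integral_congr this]
  simp

lemma phiR_of_mem {x : ℝ} (h0 : 0 ≤ x) (h1 : x ≤ 1) : phiR x = x ^ 2 := by
  have : ∀ t ∈ uIcc (0:ℝ) x, 2 * clampR t = 2 * t := by
    intro t ht
    rw [uIcc_of_le h0] at ht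
    rw [clampR_of_mem ht.1 (ht.2.trans h1)]
  rw [phiR, intervalIntegral.integral_congr this]
  rw [intervalIntegral.integral_const_mul, integral_id]
  ring

lemma phiR_of_ge {x : ℝ} (h : 1 ≤ x) : phiR x = 2 * x - 1 := by
  have h2 : phiR x - phiR 1 = ∫ t in (1:ℝ)..x, 2 * clampR t := by
    rw [phiR, phiR, ← intervalIntegral.integral_add_adjacent_intervals
      (((continuous_const.fun_mul clampR_cont)).intervalIntegrable 0 1)
      (((continuous_const.fun_mul clampR_cont)).intervalIntegrable 1 x)]
    ring
  have h3 : ∀ t ∈ uIcc (1:ℝ) x, 2 * clampR t = 2 := by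
    intro t ht
    rw [uIcc_of_le h] at ht
    rw [clampR_of_ge ht.1, mul_one]
  rw [intervalIntegral.integral_congr h3, intervalIntegral.integral_const] at h2
  have h1 : phiR 1 = 1 := by rw [phiR_of_mem zero_le_one le_rfl]; norm_num
  have := h2
  rw [h1] at this
  simp at this
  linarith

lemma phiR_nonneg (x : ℝ) : 0 ≤ phiR x := by
  rcases le_or_gt x 0 with h | h
  · rw [phiR_of_nonpos h]
  rcases le_or_gt x 1 with h1 | h1
  · rw [phiR_of_mem h.le h1]; positivity
  · rw [phiR_of_ge h1.le]; linarith

lemma phiR_le_sq (x : ℝ) : phiR x ≤ x ^ 2 := by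
  rcases le_or_gt x 0 with h | h
  · rw [phiR_of_nonpos h]; positivity
  rcases le_or_gt x 1 with h1 | h1
  · rw [phiR_of_mem h.le h1]
  · rw [phiR_of_ge h1.le]; nlinarith

noncomputable def psiR (A lam x : ℝ) : ℝ :=
  A * Real.exp (-(lam * x)) - A * lam ^ 2 * Real.exp (-lam) / 2 * phiR x

lemma psiR_hasDerivAt (A lam x : ℝ) :
    HasDerivAt (psiR A lam)
      (-(A * lam * Real.exp (-(lam * x))) - A * lam ^ 2 * Real.exp (-lam) * clampR x) x := by
  have h1 : HasDerivAt (fun x => A * Real.exp (-(lam * x))) (-(A * lam * Real.exp (-(lam * x)))) x := by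
    have := (((hasDerivAt_id x).const_mul lam).neg).exp
    have := this.const_mul A
    refine this.congr_deriv ?_
    simp only [Pi.neg_apply, id_eq]
    ring
  have h2 := (phiR_hasDerivAt x).const_mul (A * lam ^ 2 * Real.exp (-lam) / 2)
  refine (h1.sub h2).congr_deriv ?_
  ring

lemma psiR_deriv_mono {A lam : ℝ} (hA : 0 < A) (hlam : 0 < lam) :
    Monotone (fun x => -(A * lam * Real.exp (-(lam * x))) - A * lam ^ 2 * Real.exp (-lam) * clampR x) := by
  intro x y hxy
  simp only
  rw [sub_le_sub_iff]
  -- goal: C*clampR x + (−A lam e^{−lam x}) ≤ ... rearranged; we prove: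
  -- C * (clampR y - clampR x) ≤ A*lam*(exp(-(lam*x)) - exp(-(lam*y)))
  have key : A * lam ^ 2 * Real.exp (-lam) * (clampR y - clampR x)
      ≤ A * lam * (Real.exp (-(lam * x)) - Real.exp (-(lam * y))) := by
    have hmono := clampR_mono hxy
    rcases eq_or_lt_of_le hmono with heq | hlt
    · rw [← heq, sub_self, mul_zero]
      have : Real.exp (-(lam * y)) ≤ Real.exp (-(lam * x)) := by
        apply Real.exp_le_exp.2; nlinarith
      have h6 : (0:ℝ) ≤ Real.exp (-(lam * x)) - Real.exp (-(lam * y)) := by linarith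
      positivity
    · have hx1 : x < 1 := by
        by_contra hx
        push_neg at hx
        rw [clampR_of_ge hx] at hlt
        exact absurd (clampR_le_one y) (by linarith)
      have hy0 : 0 < y := by
        by_contra hy
        push_neg at hy
        rw [clampR_of_nonpos hy] at hlt
        exact absurd (clampR_nonneg x) (by linarith)
      have hxx : x ≤ clampR x := by
        rw [clampR, min_eq_left hx1.le]; exact le_max_right _ _
      have hyy : clampR y ≤ y := by
        rw [clampR, max_eq_right]
        · exact min_le_left _ _
        · exact le_min hy0.le zero_le_one
      -- exp(-(lam * clampR x)) - exp(-(lam * clampR y)) ≥ lam * exp(-lam) * (clampR y - clampR x)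
      have step1 : lam * Real.exp (-lam) * (clampR y - clampR x)
          ≤ Real.exp (-(lam * clampR x)) - Real.exp (-(lam * clampR y)) := by
        have e1 : Real.exp (-(lam * clampR x))
            = Real.exp (-(lam * clampR y)) * Real.exp (lam * (clampR y - clampR x)) := by
          rw [← Real.exp_add]; ring_nf
        have e2 : 1 + lam * (clampR y - clampR x) ≤ Real.exp (lam * (clampR y - clampR x)) :=
          Real.add_one_le_exp _ |>.trans_eq rfl |> fun h => by
            have := Real.add_one_le_exp (lam * (clampR y - clampR x)); linarith
        have e3 : Real.exp (-lam) ≤ Real.exp (-(lam * clampR y)) := by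
          apply Real.exp_le_exp.2
          nlinarith [clampR_le_one y]
        calc lam * Real.exp (-lam) * (clampR y - clampR x)
            ≤ lam * Real.exp (-(lam * clampR y)) * (clampR y - clampR x) := by
              have hd : (0:ℝ) ≤ clampR y - clampR x := by linarith
              have h5 := mul_le_mul_of_nonneg_right e3 hd
              nlinarith [mul_le_mul_of_nonneg_left h5 hlam.le]
          _ ≤ Real.exp (-(lam * clampR x)) - Real.exp (-(lam * clampR y)) := by
              rw [e1]; nlinarith [Real.exp_pos (-(lam * clampR y))]
      have step2 : Real.exp (-(lam * clampR x)) ≤ Real.exp (-(lam * x)) := by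
        apply Real.exp_le_exp.2; nlinarith
      have step3 : Real.exp (-(lam * y)) ≤ Real.exp (-(lam * clampR y)) := by
        apply Real.exp_le_exp.2; nlinarith
      calc A * lam ^ 2 * Real.exp (-lam) * (clampR y - clampR x)
          = A * (lam * Real.exp (-lam) * (clampR y - clampR x)) * lam := by ring
        _ ≤ A * (Real.exp (-(lam * clampR x)) - Real.exp (-(lam * clampR y))) * lam := by
            apply mul_le_mul_of_nonneg_right _ hlam.le
            exact mul_le_mul_of_nonneg_left step1 hA.le
        _ ≤ A * (Real.exp (-(lam * x)) - Real.exp (-(lam * y))) * lam := by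
            apply mul_le_mul_of_nonneg_right _ hlam.le
            apply mul_le_mul_of_nonneg_left _ hA.le
            linarith
        _ = A * lam * (Real.exp (-(lam * x)) - Real.exp (-(lam * y))) := by ring
  linarith

lemma psiR_convexOn {A lam : ℝ} (hA : 0 < A) (hlam : 0 < lam) :
    ConvexOn ℝ Set.univ (psiR A lam) := by
  have hdiff : Differentiable ℝ (psiR A lam) := fun x => (psiR_hasDerivAt A lam x).differentiableAt
  have hderiv : deriv (psiR A lam) = fun x =>
      -(A * lam * Real.exp (-(lam * x))) - A * lam ^ 2 * Real.exp (-lam) * clampR x :=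
    funext fun x => (psiR_hasDerivAt A lam x).deriv
  exact Monotone.convexOn_univ_of_deriv hdiff (hderiv ▸ psiR_deriv_mono hA hlam)

lemma icc_int_eq (f : ℝ → ℝ) : ∫ x in Icc (0:ℝ) 1, f x = ∫ x in (0:ℝ)..1, f x := by
  rw [intervalIntegral.integral_of_le zero_le_one, integral_Icc_eq_integral_Ioc]


lemma phiR_cont' : Continuous phiR := by
  have : Differentiable ℝ phiR := fun x => (phiR_hasDerivAt x).differentiableAt
  exact this.continuous

lemma integral_phiR : ∫ x in Icc (0:ℝ) 1, phiR x = 1/3 := by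
  rw [icc_int_eq]
  have : ∀ t ∈ uIcc (0:ℝ) 1, phiR t = t ^ 2 := by
    intro t ht
    rw [uIcc_of_le zero_le_one] at ht
    exact phiR_of_mem ht.1 ht.2
  rw [intervalIntegral.integral_congr this, integral_pow]
  norm_num

lemma integral_exp_neg (lam : ℝ) (hlam : 0 < lam) :
    ∫ x in Icc (0:ℝ) 1, Real.exp (-(lam * x)) = (1 - Real.exp (-lam)) / lam := by
  rw [icc_int_eq]
  have hd : ∀ x ∈ uIcc (0:ℝ) 1, HasDerivAt (fun x => -Real.exp (-(lam * x)) / lam)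
      (Real.exp (-(lam * x))) x := by
    intro x _
    have h1 : HasDerivAt (fun x : ℝ => -(lam * x)) (-lam) x := by
      simpa using ((hasDerivAt_id' x).const_mul lam).fun_neg
    have := (h1.exp.neg).div_const lam
    refine this.congr_deriv ?_
    field_simp
  rw [intervalIntegral.integral_eq_sub_of_hasDerivAt hd
    ((Real.continuous_exp.comp (continuous_const.mul continuous_id).neg).intervalIntegrable 0 1)]
  field_simp
  ring_nf
  rw [Real.exp_zero]
  ring

lemma integrableOn_psiR (A lam : ℝ) : IntegrableOn (psiR A lam) (Icc (0:ℝ) 1) volume := by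
  have hc : Continuous (psiR A lam) := by
    have : Differentiable ℝ (psiR A lam) := fun x => (psiR_hasDerivAt A lam x).differentiableAt
    exact this.continuous
  exact hc.integrableOn_Icc

lemma integral_psiR {A lam : ℝ} (hlam : 0 < lam) :
    ∫ x in Icc (0:ℝ) 1, psiR A lam x
      = A * ((1 - Real.exp (-lam)) / lam) - A * lam ^ 2 * Real.exp (-lam) / 2 * (1/3) := by
  have hce : Continuous fun x => A * Real.exp (-(lam * x)) :=
    continuous_const.mul (Real.continuous_exp.comp (continuous_const.mul continuous_id).neg)
  unfold psiR
  rw [integral_sub (hce.integrableOn_Icc) ((continuous_const.fun_mul phiR_cont').integrableOn_Icc),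
    integral_const_mul, integral_const_mul, integral_phiR, integral_exp_neg lam hlam]

open ProbabilityTheory in
lemma subUniform_core {Ω : Type*} [MeasurableSpace Ω] (P : Measure Ω) [IsProbabilityMeasure P]
    (X : Ω → ℝ) (hX : Measurable X) (hsub : SubUniform P X)
    (σ : ℝ) (hσ : σ = Real.sqrt (variance X P)) (hσpos : 0 < σ) (s : ℝ) (hs : 0 < s) :
    Integrable (fun ω => Real.exp (s * ((1/2 - X ω) / σ))) P ∧
    ∫ ω, Real.exp (s * ((1/2 - X ω) / σ)) ∂P
      ≤ Real.exp (-(s / (2*σ))) * ((Real.exp (s/σ) - 1) / (s/σ) + s^2 * (1/2 - 1/(24*σ^2))) := by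
  set lam := s / σ with hlamdef
  have hlam : 0 < lam := div_pos hs hσpos
  set A := Real.exp (s / (2*σ)) with hAdef
  have hA : 0 < A := Real.exp_pos _
  set C := A * lam ^ 2 * Real.exp (-lam) with hCdef
  have hC : 0 < C := by positivity
  -- square integrability
  have hsq := hsub (fun x => x ^ 2) (Even.convexOn_pow even_two) (by
    have : (fun ω => max (-(X ω ^ 2)) 0) = fun _ => (0:ℝ) := by
      funext ω; exact max_eq_right (neg_nonpos.2 (sq_nonneg _))
    rw [this]; exact integrable_const 0)
  obtain ⟨hsqInt, hsqB⟩ := hsq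
  -- identity and negation: mean is 1/2
  have hXabs : Integrable (fun ω => X ω ^ 2 + 1) P := hsqInt.add (integrable_const 1)
  have hid := hsub (fun x => x) (convexOn_id convex_univ) (by
    refine Integrable.mono hXabs ((hX.neg.max measurable_const).aestronglyMeasurable) ?_
    filter_upwards with ω
    rw [Real.norm_eq_abs, Real.norm_eq_abs]
    have h1 : max (-(X ω)) 0 ≤ |X ω| := max_le (neg_le_abs _) (abs_nonneg _)
    have h2 : |max (-(X ω)) 0| = max (-(X ω)) 0 := abs_of_nonneg (le_max_right _ _)
    rw [abs_of_nonneg (by positivity : (0:ℝ) ≤ X ω ^ 2 + 1)]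
    nlinarith [sq_abs (X ω), abs_nonneg (X ω), sq_nonneg (|X ω| - 1)])
  obtain ⟨hXInt, hXB⟩ := hid
  have hneg := hsub (fun x => -x) (neg_convexOn_iff.2 (concaveOn_id convex_univ)) (by
    refine Integrable.mono hXabs ((hX.neg.neg.max measurable_const).aestronglyMeasurable) ?_
    filter_upwards with ω
    rw [Real.norm_eq_abs, Real.norm_eq_abs]
    have h1 : max (X ω) 0 ≤ |X ω| := max_le (le_abs_self _) (abs_nonneg _)
    have h2 : |max (-(-X ω)) 0| = max (X ω) 0 := by rw [neg_neg]; exact abs_of_nonneg (le_max_right _ _)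
    rw [abs_of_nonneg (by positivity : (0:ℝ) ≤ X ω ^ 2 + 1)]
    nlinarith [sq_abs (X ω), abs_nonneg (X ω), sq_nonneg (|X ω| - 1)])
  obtain ⟨_, hnegB⟩ := hneg
  have hIccId : ∫ x in Icc (0:ℝ) 1, x ∂volume = 1/2 := by
    rw [icc_int_eq, integral_id]; norm_num
  have hIccNeg : ∫ x in Icc (0:ℝ) 1, -x ∂volume = -(1/2) := by
    rw [MeasureTheory.integral_neg, hIccId]
  have hmean : ∫ ω, X ω ∂P = 1/2 := by
    simp only [MeasureTheory.integral_neg] at hnegB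
    rw [hIccNeg] at hnegB
    rw [hIccId] at hXB
    linarith
  -- variance
  have hmem : MemLp X 2 P := (memLp_two_iff_integrable_sq hX.aestronglyMeasurable).2 hsqInt
  have hvar : variance X P = ∫ ω, X ω ^ 2 ∂P - (1/2) ^ 2 := by
    rw [variance_eq_sub hmem, hmean]
    rfl
  have hσ2 : σ ^ 2 = variance X P := by
    rw [hσ, Real.sq_sqrt (variance_nonneg _ _)]
  have hsqmean : ∫ ω, X ω ^ 2 ∂P = σ ^ 2 + 1/4 := by
    rw [hσ2, hvar]; norm_num
  -- apply with psi
  have hpsicont : Continuous (psiR A lam) := by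
    have : Differentiable ℝ (psiR A lam) := fun x => (psiR_hasDerivAt A lam x).differentiableAt
    exact this.continuous
  have hmeasneg : Measurable fun ω => max (-(psiR A lam (X ω))) 0 :=
    ((hpsicont.measurable.comp hX).neg.max measurable_const)
  have hpsi := hsub (psiR A lam) (psiR_convexOn hA hlam) (by
    refine Integrable.mono (hsqInt.const_mul (C/2)) hmeasneg.aestronglyMeasurable ?_
    filter_upwards with ω
    rw [Real.norm_eq_abs, Real.norm_eq_abs]
    have hb : -psiR A lam (X ω) ≤ C/2 * X ω ^ 2 := by
      have h1 : phiR (X ω) ≤ X ω ^ 2 := phiR_le_sq _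
      have h2 : 0 < A * Real.exp (-(lam * X ω)) := by positivity
      simp only [psiR]
      rw [hCdef]
      nlinarith
    have h3 : |max (-psiR A lam (X ω)) 0| = max (-psiR A lam (X ω)) 0 :=
      abs_of_nonneg (le_max_right _ _)
    have h4 : C/2 * X ω ^ 2 ≤ |C/2 * X ω ^ 2| := le_abs_self _
    have h5 : max (-psiR A lam (X ω)) 0 ≤ C/2 * X ω ^ 2 :=
      max_le hb (by positivity)
    calc |max (-psiR A lam (X ω)) 0| = max (-psiR A lam (X ω)) 0 := h3
      _ ≤ C/2 * X ω ^ 2 := h5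
      _ ≤ |C/2 * X ω ^ 2| := h4)
  obtain ⟨hpsiInt, hpsiB⟩ := hpsi
  -- integrability of phiR ∘ X
  have hphiInt : Integrable (fun ω => phiR (X ω)) P := by
    refine Integrable.mono hsqInt ((phiR_cont'.measurable.comp hX)).aestronglyMeasurable ?_
    filter_upwards with ω
    rw [Real.norm_eq_abs, Real.norm_eq_abs, abs_of_nonneg (phiR_nonneg _)]
    exact (phiR_le_sq _).trans (le_abs_self _)
  have hphiB : ∫ ω, phiR (X ω) ∂P ≤ σ ^ 2 + 1/4 := by
    rw [← hsqmean]
    exact integral_mono hphiInt hsqInt fun ω => phiR_le_sq _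
  -- identify the exponential with psi + C/2 * phi
  have hgeq : (fun ω => Real.exp (s * ((1/2 - X ω) / σ)))
      = fun ω => psiR A lam (X ω) + C/2 * phiR (X ω) := by
    funext ω
    have : s * ((1/2 - X ω) / σ) = s / (2*σ) + -(lam * X ω) := by
      rw [hlamdef]
      field_simp [ne_of_gt hσpos]
      ring
    rw [this, Real.exp_add, psiR, hAdef, hCdef]
    ring
  have hgInt : Integrable (fun ω => Real.exp (s * ((1/2 - X ω) / σ))) P := by
    rw [hgeq]; exact hpsiInt.add (hphiInt.const_mul _)
  refine ⟨hgInt, ?_⟩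
  have hgB : ∫ ω, Real.exp (s * ((1/2 - X ω) / σ)) ∂P
      ≤ (A * ((1 - Real.exp (-lam)) / lam) - C / 2 * (1/3)) + C/2 * (σ ^ 2 + 1/4) := by
    rw [hgeq, integral_add hpsiInt (hphiInt.const_mul _), integral_const_mul]
    have h1 : ∫ ω, psiR A lam (X ω) ∂P
        ≤ A * ((1 - Real.exp (-lam)) / lam) - A * lam ^ 2 * Real.exp (-lam) / 2 * (1/3) :=
      hpsiB.trans_eq (integral_psiR hlam)
    have h2 : C/2 * ∫ ω, phiR (X ω) ∂P ≤ C/2 * (σ ^ 2 + 1/4) :=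
      mul_le_mul_of_nonneg_left hphiB (by positivity)
    have : A * lam ^ 2 * Real.exp (-lam) / 2 * (1/3) = C / 2 * (1/3) := by rw [hCdef]
    linarith
  refine hgB.trans_eq ?_
  have hσne : σ ≠ 0 := ne_of_gt hσpos
  have hsne : s ≠ 0 := ne_of_gt hs
  have hAne : A ≠ 0 := ne_of_gt hA
  have hEF : Real.exp (s / σ) = A * A := by
    rw [hAdef, ← Real.exp_add]
    congr 1
    field_simp
    ring
  have hexplam : Real.exp (-lam) = (A * A)⁻¹ := by rw [hlamdef, Real.exp_neg, hEF]
  have hexpneg : Real.exp (-(s / (2*σ))) = A⁻¹ := by rw [Real.exp_neg, hAdef]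
  rw [hCdef, hexplam, hexpneg, hEF, hlamdef]
  field_simp
  ring


open ProbabilityTheory in
/-- Let `X₁, …, Xₙ` be independent sub-uniform random variables with (strictly
positive) standard deviations `σ₁, …, σₙ`, and let `Ȳₙ = n⁻¹ ∑ᵢ (1/2 − Xᵢ)/σᵢ`.
Then for every `t ≥ 0` and every `s > 0`,
`P(Ȳₙ ≥ t) ≤ ∏ᵢ exp[−s{t + 1/(2σᵢ)}] {(e^{s/σᵢ} − 1)/(s/σᵢ) + s²(1/2 − 1/(24σᵢ²))}`. -/
theorem subUniform_standardized_avg_chernoff {Ω : Type*} [MeasurableSpace Ω]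
    (P : Measure Ω) [IsProbabilityMeasure P] (n : ℕ) (hn : 0 < n)
    (X : Fin n → Ω → ℝ) (hmeas : ∀ i, Measurable (X i))
    (hind : iIndepFun X P)
    (hsub : ∀ i, SubUniform P (X i))
    (σ : Fin n → ℝ) (hσ : ∀ i, σ i = Real.sqrt (variance (X i) P))
    (hσpos : ∀ i, 0 < σ i)
    (t : ℝ) (ht : 0 ≤ t) (s : ℝ) (hs : 0 < s) :
    P {ω | (∑ i, (1/2 - X i ω) / σ i) / n ≥ t} ≤
      ENNReal.ofReal (∏ i, Real.exp (-(s * (t + 1 / (2 * σ i)))) *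
        ((Real.exp (s / σ i) - 1) / (s / σ i) + s ^ 2 * (1/2 - 1 / (24 * σ i ^ 2)))) := by
  have hnR : (0:ℝ) < n := Nat.cast_pos.2 hn
  set Y : Fin n → Ω → ℝ := fun i ω => (1/2 - X i ω) / σ i with hY
  have hYmeas : ∀ i, Measurable (Y i) :=
    fun i => (measurable_const.sub (hmeas i)).div_const _
  have hindY : iIndepFun Y P :=
    hind.comp (fun i x => (1/2 - x) / σ i)
      (fun i => (measurable_const.sub measurable_id).div_const _)
  have core := fun i => subUniform_core P (X i) (hmeas i) (hsub i) (σ i) (hσ i) (hσpos i) s hs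
  have hIntSum : Integrable (fun ω => Real.exp (s * (∑ i, Y i) ω)) P :=
    hindY.integrable_exp_mul_sum hYmeas (fun i _ => (core i).1)
  have hset : {ω | (∑ i, (1/2 - X i ω) / σ i) / n ≥ t} = {ω | t * n ≤ (∑ i, Y i) ω} := by
    ext ω
    simp only [Set.mem_setOf_eq, ge_iff_le, Finset.sum_apply, hY]
    rw [le_div_iff₀ hnR]
  have hch := measure_ge_le_exp_mul_mgf (μ := P) (X := ∑ i, Y i) (t := s) (t * n) hs.le hIntSum
  rw [hindY.mgf_sum hYmeas Finset.univ] at hch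
  have hprod : Real.exp (-s * (t * n)) * ∏ i, mgf (Y i) P s
      ≤ ∏ i, Real.exp (-(s * (t + 1 / (2 * σ i)))) *
        ((Real.exp (s / σ i) - 1) / (s / σ i) + s ^ 2 * (1/2 - 1 / (24 * σ i ^ 2))) := by
    have he : Real.exp (-s * (t * n)) = ∏ _i : Fin n, Real.exp (-(s * t)) := by
      rw [Finset.prod_const, Finset.card_univ, Fintype.card_fin]
      rw [← Real.exp_nat_mul]
      congr 1
      ring
    rw [he, ← Finset.prod_mul_distrib]
    refine Finset.prod_le_prod (fun i _ => ?_) (fun i _ => ?_)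
    · exact mul_nonneg (Real.exp_pos _).le (mgf_nonneg)
    · have h1 : mgf (Y i) P s ≤ Real.exp (-(s / (2 * σ i))) *
          ((Real.exp (s / σ i) - 1) / (s / σ i) + s ^ 2 * (1/2 - 1 / (24 * σ i ^ 2))) := (core i).2
      have h2 := mul_le_mul_of_nonneg_left h1 (Real.exp_pos (-(s * t))).le
      refine h2.trans_eq ?_
      rw [← mul_assoc, ← Real.exp_add]
      congr 2
      have : σ i ≠ 0 := ne_of_gt (hσpos i)
      field_simp
      ring
  rw [hset]
  calc P {ω | t * n ≤ (∑ i, Y i) ω}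
      = ENNReal.ofReal (P {ω | t * n ≤ (∑ i, Y i) ω}).toReal :=
        (ENNReal.ofReal_toReal (measure_ne_top P _)).symm
    _ ≤ _ := ENNReal.ofReal_le_ofReal (hch.trans hprod)
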